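/- Let a ∈ ℝ with a ≥ 0, let τ ∈ ℝ with τ > 2, and define L̂ : ℝ² → ℝ² by L̂(x, y) = (τx − y + a, x) (the case det A = 1, Δ = 2 − τ < 0). Then for every natural number n ≥ 1 there exist no real numbers x > 0 and y > 0 such that L̂^[n](x, 0) = (0, y). -/
import Mathlib


/-- for `det A = 1`, `tr A = τ > 2` and `a ≥ 0`, the affine map
`L̂(x,y) = (τx − y + a, x)` has no strings: no iterate maps a point on the
positive x-axis to a point on the positive y-axis. -/
theorem stmt_9 (a τ : ℝ) (ha : 0 ≤ a) (hτ : 2 < τ)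
    (L : ℝ × ℝ → ℝ × ℝ) (hL : L = fun p => (τ * p.1 - p.2 + a, p.1)) :
    ∀ n : ℕ, 1 ≤ n → ¬ ∃ x y : ℝ, 0 < x ∧ 0 < y ∧ L^[n] (x, 0) = (0, y) := by
  intro n hn ⟨x, y, hx, hy, heq⟩
  -- invariant: for n ≥ 1, 0 < second coordinate < first coordinate
  have key : ∀ m : ℕ, 0 < (L^[m+1] (x, 0)).2 ∧ (L^[m+1] (x, 0)).2 < (L^[m+1] (x, 0)).1 := by
    intro m
    induction m with
    | zero =>
      have : L^[0+1] (x, 0) = (τ * x - 0 + a, x) := by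
        simp [hL]
      rw [this]
      dsimp only
      refine ⟨hx, by nlinarith⟩
    | succ k ih =>
      obtain ⟨h1, h2⟩ := ih
      rw [Function.iterate_succ_apply']
      set p := L^[k+1] (x, 0) with hp
      rw [hL]
      dsimp only
      refine ⟨h1.trans h2, ?_⟩
      nlinarith
  obtain ⟨m, rfl⟩ : ∃ m, n = m + 1 := ⟨n - 1, by omega⟩
  obtain ⟨h1, h2⟩ := key m
  rw [heq] at h1 h2
  simp at h1 h2
  linarith
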